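/- Let a 1.5-way guess-tape automaton be given (finite state type Q, guess alphabet Δ, transition function δ : Q → Δ → Q × Move with Move = {stay, right, return}, accepting set A ⊆ Q), let τ : ℕ → Δ be a guess, and consider the run (qₙ, pₙ) started at (q₀, 0). Suppose the run first reaches an accepting state at time T, i.e. q_T ∈ A and qₙ ∉ A for all n < T. Then the number of steps n < T at which the return command is taken (i.e. at which the move component of δ qₙ (τ pₙ) is return) is at most Fintype.card Q. (The paper's Lemma: any accepting computation of a 1.5-way automaton includes no more than #Q moves to the initial cell, since after each return the automaton deterministically rescans the same tape content, so a repeated post-return state would force a loop.) -/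
import Mathlib


/-- Move commands of a 1.5-way guess-tape automaton: stay in place, step right,
or return to the initial cell. -/
inductive Move15 where
  | stay : Move15
  | right : Move15
  | ret : Move15
deriving DecidableEq

/-- One step of a 1.5-way guess-tape automaton with transition function `δ`
on guess tape `τ`: a configuration is a pair (state, position). -/
def step15 {Q Δ : Type*} (δ : Q → Δ → Q × Move15) (τ : ℕ → Δ) :
    Q × ℕ → Q × ℕ :=
  fun c =>
    let r := δ c.1 (τ c.2)
    match r.2 with
    | .stay => (r.1, c.2)
    | .right => (r.1, c.2 + 1)
    | .ret => (r.1, 0)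

/-- The `n`-th configuration of the run started at state `q₀` on cell `0`. -/
def run15 {Q Δ : Type*} (δ : Q → Δ → Q × Move15) (τ : ℕ → Δ) (q₀ : Q) (n : ℕ) :
    Q × ℕ :=
  (step15 δ τ)^[n] (q₀, 0)
lemma run15_add {Q Δ : Type*} (δ : Q → Δ → Q × Move15) (τ : ℕ → Δ) (q₀ : Q)
    (a b : ℕ) : run15 δ τ q₀ (b + a) = (step15 δ τ)^[b] (run15 δ τ q₀ a) := by
  simp [run15, Function.iterate_add_apply]

lemma run15_ret {Q Δ : Type*} (δ : Q → Δ → Q × Move15) (τ : ℕ → Δ) (q₀ : Q)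
    (n : ℕ) (h : (δ (run15 δ τ q₀ n).1 (τ (run15 δ τ q₀ n).2)).2 = Move15.ret) :
    run15 δ τ q₀ (n + 1) =
      ((δ (run15 δ τ q₀ n).1 (τ (run15 δ τ q₀ n).2)).1, 0) := by
  simp only [run15] at h
  simp [run15, Function.iterate_succ_apply', step15, h]

theorem stmt_9 {Q Δ : Type*} [Fintype Q] (δ : Q → Δ → Q × Move15) (A : Set Q)
    (τ : ℕ → Δ) (q₀ : Q) (T : ℕ)
    (hacc : (run15 δ τ q₀ T).1 ∈ A)
    (hfirst : ∀ n < T, (run15 δ τ q₀ n).1 ∉ A) :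
    ((Finset.range T).filter
        (fun n => (δ (run15 δ τ q₀ n).1 (τ (run15 δ τ q₀ n).2)).2 = Move15.ret)).card
      ≤ Fintype.card Q := by
  classical
  have key : ∀ n₁ ∈ (Finset.range T).filter
      (fun n => (δ (run15 δ τ q₀ n).1 (τ (run15 δ τ q₀ n).2)).2 = Move15.ret),
      ∀ n₂ ∈ (Finset.range T).filter
      (fun n => (δ (run15 δ τ q₀ n).1 (τ (run15 δ τ q₀ n).2)).2 = Move15.ret),
      n₁ < n₂ →
      (run15 δ τ q₀ (n₁ + 1)).1 ≠ (run15 δ τ q₀ (n₂ + 1)).1 := by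
    intro n₁ h₁ n₂ h₂ hlt heq
    simp only [Finset.mem_filter, Finset.mem_range] at h₁ h₂
    have e₁ := run15_ret δ τ q₀ n₁ h₁.2
    have e₂ := run15_ret δ τ q₀ n₂ h₂.2
    have hconf : run15 δ τ q₀ (n₁ + 1) = run15 δ τ q₀ (n₂ + 1) := by
      rw [e₁, e₂] at heq ⊢
      simp at heq
      simp [heq]
    -- periodicity: run (m + (n₂ - n₁)) = run m for m ≥ n₁+1
    have hT : n₂ + 1 ≤ T := h₂.1
    have hTsplit : T = (T - (n₂ + 1)) + (n₂ + 1) := by omega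
    have hrunT : run15 δ τ q₀ T = run15 δ τ q₀ ((T - (n₂ + 1)) + (n₁ + 1)) := by
      have h1 : run15 δ τ q₀ T
          = (step15 δ τ)^[T - (n₂ + 1)] (run15 δ τ q₀ (n₂ + 1)) := by
        rw [← run15_add]; congr 1
      rw [h1, ← hconf, ← run15_add]
    have hlt' : (T - (n₂ + 1)) + (n₁ + 1) < T := by omega
    exact hfirst _ hlt' (hrunT ▸ hacc)
  have hinj : Set.InjOn (fun n => (run15 δ τ q₀ (n + 1)).1)
      ((Finset.range T).filter
        (fun n => (δ (run15 δ τ q₀ n).1 (τ (run15 δ τ q₀ n).2)).2 = Move15.ret)) := by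
    intro a ha b hb hab
    rcases lt_trichotomy a b with h | h | h
    · exact absurd hab (key a ha b hb h)
    · exact h
    · exact absurd hab.symm (key b hb a ha h)
  calc ((Finset.range T).filter _).card
      ≤ Finset.univ.card := Finset.card_le_card_of_injOn _ (fun _ _ => Finset.mem_univ _) hinj
    _ = Fintype.card Q := Finset.card_univ
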